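/- Consider a market with n buyers where buyer i has a k_i-demand valuation, |M| = Σ_{i=1}^n k_i, and every optimal allocation allocates all items and gives each buyer i exactly k_i items. Let O = (O_1,…,O_n) be an optimal allocation, and let x_1,…,x_k be items with x_ℓ ∈ O_{i_ℓ}, where i_ℓ ≠ i_{ℓ+1} for all ℓ (indices cyclic, x_{k+1} = x_1). If Σ_{ℓ=1}^{k} ( v_{i_ℓ}({x_ℓ}) − v_{i_ℓ}({x_{ℓ+1}}) ) = 0, then for every ℓ the item x_{ℓ+1} is legal for buyer i_ℓ. -/

import Mathlib

open Finset

section Defs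

variable {M : Type*} [Fintype M] [DecidableEq M] {ι : Type*} [Fintype ι]

/-- A valuation is monotone. -/
def MonotoneVal (v : Finset M → ℝ) : Prop :=
  ∀ ⦃S T : Finset M⦄, S ⊆ T → v S ≤ v T

/-- Quasi-linear utility of a bundle `S` at prices `p`. -/
def util (v : Finset M → ℝ) (p : M → ℝ) (S : Finset M) : ℝ :=
  v S - ∑ x ∈ S, p x

/-- `S` is a utility-maximizing bundle for valuation `v` at prices `p`. -/
def InDemand (v : Finset M → ℝ) (p : M → ℝ) (S : Finset M) : Prop :=
  ∀ T : Finset M, util v p T ≤ util v p S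

/-- Gross-substitutes valuation. -/
def GrossSubstitutes (v : Finset M → ℝ) : Prop :=
  ∀ p q : M → ℝ, (∀ x, 0 ≤ p x) → (∀ x, 0 ≤ q x) → (∀ x, p x ≤ q x) →
    ∀ A : Finset M, InDemand v p A →
      ∃ B : Finset M, InDemand v q B ∧ ∀ x ∈ A, p x = q x → x ∈ B

/-- `v` is a `k`-demand (multi-demand) valuation:
`v S` is the maximum of `∑_{x ∈ T} v {x}` over `T ⊆ S` with `|T| ≤ k`. -/
def MultiDemand (v : Finset M → ℝ) (k : ℕ) : Prop :=
  ∀ S : Finset M,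
    IsGreatest {t : ℝ | ∃ T ⊆ S, T.card ≤ k ∧ t = ∑ x ∈ T, v {x}} (v S)

/-- `v` is a unit-demand valuation: `v ∅ = 0` and `v S = max_{x ∈ S} v {x}`. -/
def UnitDemand (v : Finset M → ℝ) : Prop :=
  v ∅ = 0 ∧ ∀ S : Finset M, S.Nonempty →
    IsGreatest {t : ℝ | ∃ x ∈ S, t = v {x}} (v S)

/-- An allocation: a family of pairwise disjoint bundles. -/
def IsAlloc (A : ι → Finset M) : Prop :=
  ∀ i j : ι, i ≠ j → Disjoint (A i) (A j)

/-- Social welfare of an allocation. -/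
def SW (v : ι → Finset M → ℝ) (A : ι → Finset M) : ℝ :=
  ∑ i, v i (A i)

/-- An optimal allocation: it maximizes social welfare among allocations. -/
def IsOptimalAlloc (v : ι → Finset M → ℝ) (A : ι → Finset M) : Prop :=
  IsAlloc A ∧ ∀ B : ι → Finset M, IsAlloc B → SW v B ≤ SW v A

/-- `p` is an optimal dynamic pricing: every demanded bundle of every buyer is
her bundle in some optimal allocation. -/
def IsDynamicPricing (v : ι → Finset M → ℝ) (p : M → ℝ) : Prop :=
  (∀ x, 0 ≤ p x) ∧
  ∀ (i : ι) (S : Finset M), InDemand (v i) p S →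
    ∃ A : ι → Finset M, IsOptimalAlloc v A ∧ A i = S

/-- Walrasian equilibrium: every buyer gets a demanded bundle and unallocated
items have price 0. -/
def IsWalrasianEq (v : ι → Finset M → ℝ) (A : ι → Finset M) (p : M → ℝ) : Prop :=
  (∀ x, 0 ≤ p x) ∧ IsAlloc A ∧ (∀ i, InDemand (v i) p (A i)) ∧
  ∀ x : M, (∀ i, x ∉ A i) → p x = 0

/-- Item `x` is legal for buyer `i`: some optimal allocation gives `x` to `i`. -/
def LegalItem (v : ι → Finset M → ℝ) (i : ι) (x : M) : Prop :=
  ∃ A : ι → Finset M, IsOptimalAlloc v A ∧ x ∈ A i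

/-- A bundle `S` is legal for buyer `i`: `|S| = k i` and every item of `S` is legal for `i`. -/
def LegalBundle (v : ι → Finset M → ℝ) (k : ι → ℕ) (i : ι) (S : Finset M) : Prop :=
  S.card = k i ∧ ∀ x ∈ S, LegalItem v i x

/-- A legal allocation: every buyer's bundle is legal for her. -/
def LegalAlloc (v : ι → Finset M → ℝ) (k : ι → ℕ) (A : ι → Finset M) : Prop :=
  IsAlloc A ∧ ∀ i, LegalBundle v k i (A i)

/-- Submodularity condition (SM). -/
def SMcond (v : Finset M → ℝ) : Prop :=
  ∀ (x y : M) (S : Finset M), x ≠ y → x ∉ S → y ∉ S →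
    v S + v (S ∪ {x, y}) ≤ v (S ∪ {x}) + v (S ∪ {y})

/-- Condition (RGP). -/
def RGPcond (v : Finset M → ℝ) : Prop :=
  ∀ (x y z : M) (S : Finset M), x ≠ y → x ≠ z → y ≠ z → x ∉ S → y ∉ S → z ∉ S →
    v (S ∪ {x}) + v (S ∪ {y, z}) ≤
      max (v (S ∪ {y}) + v (S ∪ {x, z})) (v (S ∪ {z}) + v (S ∪ {x, y}))

/-- Condition (NP-SM) with nonnegative prices. -/
def NPSM (v : Finset M → ℝ) : Prop :=
  ¬ ∃ (p : M → ℝ) (x y : M) (S : Finset M),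
      (∀ a, 0 ≤ p a) ∧ x ≠ y ∧ x ∉ S ∧ y ∉ S ∧ 0 < p x ∧ 0 < p y ∧
      InDemand v p S ∧ InDemand v p (S ∪ {x, y}) ∧
      ∀ C : Finset M, InDemand v p C → (C ⊆ S ∨ ∃ T ⊆ S, C = T ∪ {x, y})

/-- Condition (NP-RGP) with nonnegative prices. -/
def NPRGP (v : Finset M → ℝ) : Prop :=
  ¬ ∃ (p : M → ℝ) (x y z : M) (S : Finset M),
      (∀ a, 0 ≤ p a) ∧ x ≠ y ∧ x ≠ z ∧ y ≠ z ∧ x ∉ S ∧ y ∉ S ∧ z ∉ S ∧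
      0 < p x ∧ 0 < p y ∧ 0 < p z ∧
      InDemand v p (S ∪ {x}) ∧ InDemand v p (S ∪ {y, z}) ∧
      ∀ C : Finset M, InDemand v p C →
        ((∃ T ⊆ S, C = T ∪ {x}) ∨ ∃ T ⊆ S, C = T ∪ {y, z})

end Defs
section Aux

variable {M : Type*} [Fintype M] [DecidableEq M] {n : ℕ}

lemma md_single_nonneg {v : Finset M → ℝ} {k : ℕ} (h : MultiDemand v k) (y : M) :
    0 ≤ v {y} :=
  (h {y}).2 ⟨∅, Finset.empty_subset _, by simp, by simp⟩

lemma md_eq_sum {v : Finset M → ℝ} {k : ℕ} (h : MultiDemand v k) {S : Finset M}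
    (hS : S.card ≤ k) : v S = ∑ y ∈ S, v {y} := by
  refine le_antisymm ?_ ((h S).2 ⟨S, subset_rfl, hS, rfl⟩)
  obtain ⟨T, hTS, -, hv⟩ := (h S).1
  rw [hv]
  exact Finset.sum_le_sum_of_subset_of_nonneg hTS (fun y _ _ => md_single_nonneg h y)

lemma cycle_key (v : Fin n → Finset M → ℝ) (k : Fin n → ℕ)
    (hmd : ∀ i, MultiDemand (v i) (k i))
    (O : Fin n → Finset M) (hO : IsOptimalAlloc v O)
    (hOcard : ∀ i, (O i).card = k i) :
    ∀ L : ℕ, 0 < L → ∀ (i : ℕ → Fin n) (x : ℕ → M),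
    (∀ ℓ < L, x ℓ ∈ O (i ℓ)) →
    0 ≤ (∑ ℓ ∈ Finset.range L, (v (i ℓ) {x ℓ} - v (i ℓ) {x ((ℓ+1) % L)})) ∧
    ((∑ ℓ ∈ Finset.range L, (v (i ℓ) {x ℓ} - v (i ℓ) {x ((ℓ+1) % L)})) = 0 →
      ∀ ℓ < L, LegalItem v (i ℓ) (x ((ℓ+1) % L))) := by
  intro L
  induction L using Nat.strong_induction_on with
  | _ L IH =>
  intro hL i x hxO
  classical
  have hOdisj : ∀ {j j' : Fin n} {y : M}, y ∈ O j → y ∈ O j' → j = j' := by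
    intro j j' y hy hy'
    by_contra hne'
    exact (Finset.disjoint_left.mp (hO.1 j j' hne') hy) hy'
  by_cases hdup : ∃ a, ∃ b, a < b ∧ b < L ∧ x a = x b
  · -- split into two smaller cycles
    obtain ⟨a, b, hab, hbL, hxab⟩ := hdup
    have haL : a < L := lt_trans hab hbL
    set L1 := b - a with hL1
    set L2 := L - b + a with hL2
    -- sub-cycle 1
    have hx1 : ∀ t < L1, x (a + (t+1) % L1) = x ((a+t+1) % L) := by
      intro t ht
      by_cases h1 : t + 1 < L1
      · rw [Nat.mod_eq_of_lt h1, Nat.mod_eq_of_lt (by omega), Nat.add_assoc]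
      · have h1' : t + 1 = L1 := by omega
        rw [h1', Nat.mod_self, Nat.mod_eq_of_lt (by omega)]
        have : a + t + 1 = b := by omega
        rw [this, Nat.add_zero, hxab]
    have H1 := IH L1 (by omega) (by omega) (fun t => i (a+t)) (fun t => x (a+t))
      (fun t ht => hxO (a+t) (by omega))
    -- sub-cycle 2
    set e2 : ℕ → ℕ := fun t => if b + t < L then b + t else b + t - L with he2
    have he2lt : ∀ t, t < L2 → e2 t < L := by
      intro t ht; simp only [e2]; split <;> omega
    have hx2 : ∀ t < L2, x (e2 ((t+1) % L2)) = x ((e2 t + 1) % L) := by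
      intro t ht
      by_cases h1' : t + 1 < L2
      · rw [Nat.mod_eq_of_lt h1']
        by_cases hc1 : b + t + 1 < L
        · have e1 : e2 (t+1) = b + t + 1 := by
            simp only [e2]; rw [if_pos (by omega)]; omega
          have e0 : e2 t = b + t := by simp only [e2]; rw [if_pos (by omega)]
          rw [e1, e0, Nat.mod_eq_of_lt (by omega)]
        · by_cases hc2 : b + t + 1 = L
          · have e1 : e2 (t+1) = 0 := by simp only [e2]; rw [if_neg (by omega)]; omega
            have e0 : e2 t = b + t := by simp only [e2]; rw [if_pos (by omega)]
            rw [e1, e0]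
            have : (b + t + 1) % L = 0 := by rw [hc2, Nat.mod_self]
            rw [this]
          · have e1 : e2 (t+1) = b + t + 1 - L := by
              simp only [e2]; rw [if_neg (by omega)]; omega
            have e0 : e2 t = b + t - L := by simp only [e2]; rw [if_neg (by omega)]
            rw [e1, e0]
            have : (b + t - L + 1) % L = b + t + 1 - L := by
              rw [Nat.mod_eq_of_lt (by omega)]; omega
            rw [this]
      · -- wrap-around of sub-cycle 2
        have h1 : t + 1 = L2 := by omega
        rw [h1, Nat.mod_self]
        have he0 : e2 0 = b := by simp only [e2]; rw [if_pos (by omega)]; omega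
        rw [he0]
        by_cases ha0 : a = 0
        · have het : e2 t = L - 1 := by simp only [e2]; rw [if_pos (by omega)]; omega
          rw [het]
          have : (L - 1 + 1) % L = 0 := by
            have : L - 1 + 1 = L := by omega
            rw [this, Nat.mod_self]
          rw [this]
          have h0a : (0:ℕ) = a := ha0.symm
          rw [h0a, hxab]
        · have het : e2 t = a - 1 := by simp only [e2]; rw [if_neg (by omega)]; omega
          rw [het]
          have : (a - 1 + 1) % L = a := by rw [Nat.mod_eq_of_lt (by omega)]; omega
          rw [this, hxab]
    have H2 := IH L2 (by omega) (by omega) (fun t => i (e2 t)) (fun t => x (e2 t))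
      (fun t ht => hxO (e2 t) (he2lt t ht))
    -- sum splitting
    have hsum1 : (∑ t ∈ Finset.range L1,
        (v (i (a+t)) {x (a+t)} - v (i (a+t)) {x (a + (t+1) % L1)}))
        = ∑ ℓ ∈ Finset.Ico a b, (v (i ℓ) {x ℓ} - v (i ℓ) {x ((ℓ+1) % L)}) := by
      rw [Finset.sum_Ico_eq_sum_range]
      refine Finset.sum_congr (by rw [hL1]) ?_
      intro t ht
      rw [Finset.mem_range] at ht
      rw [hx1 t ht, Nat.add_assoc]
    have hsum2 : (∑ t ∈ Finset.range L2,
        (v (i (e2 t)) {x (e2 t)} - v (i (e2 t)) {x (e2 ((t+1) % L2))}))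
        = (∑ ℓ ∈ Finset.Ico b L, (v (i ℓ) {x ℓ} - v (i ℓ) {x ((ℓ+1) % L)}))
          + ∑ ℓ ∈ Finset.Ico 0 a, (v (i ℓ) {x ℓ} - v (i ℓ) {x ((ℓ+1) % L)}) := by
      have hsplitrange : Finset.range L2 = Finset.Ico 0 (L - b) ∪ Finset.Ico (L-b) L2 := by
        rw [Finset.range_eq_Ico, Finset.Ico_union_Ico_eq_Ico (by omega) (by omega)]
      rw [hsplitrange, Finset.sum_union (Finset.Ico_disjoint_Ico_consecutive 0 (L-b) L2)]
      congr 1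
      · rw [Finset.sum_Ico_eq_sum_range, Finset.sum_Ico_eq_sum_range]
        refine Finset.sum_congr (by rw [Nat.sub_zero]) ?_
        intro t ht
        rw [Finset.mem_range] at ht
        rw [Nat.zero_add, hx2 t (by omega)]
        have e0 : e2 t = b + t := by simp only [e2]; rw [if_pos (by omega)]
        rw [e0]
      · rw [Finset.sum_Ico_eq_sum_range, Finset.sum_Ico_eq_sum_range]
        refine Finset.sum_congr (by congr 1; omega) ?_
        intro t ht
        rw [Finset.mem_range] at ht
        rw [hx2 (L - b + t) (by omega)]
        have e0 : e2 (L - b + t) = 0 + t := by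
          simp only [e2]; rw [if_neg (by omega)]; omega
        rw [e0]
    have hsplit : (∑ ℓ ∈ Finset.range L, (v (i ℓ) {x ℓ} - v (i ℓ) {x ((ℓ+1) % L)}))
        = (∑ t ∈ Finset.range L1,
            (v (i (a+t)) {x (a+t)} - v (i (a+t)) {x (a + (t+1) % L1)}))
          + ∑ t ∈ Finset.range L2,
            (v (i (e2 t)) {x (e2 t)} - v (i (e2 t)) {x (e2 ((t+1) % L2))}) := by
      rw [hsum1, hsum2, Finset.range_eq_Ico,
        ← Finset.sum_Ico_consecutive _ (Nat.zero_le a) (le_of_lt haL),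
        ← Finset.sum_Ico_consecutive _ (le_of_lt hab) (le_of_lt hbL)]
      ring
    constructor
    · rw [hsplit]; linarith [H1.1, H2.1]
    · intro h0 ℓ hℓ
      rw [hsplit] at h0
      have hW1 : (∑ t ∈ Finset.range L1,
          (v (i (a+t)) {x (a+t)} - v (i (a+t)) {x (a + (t+1) % L1)})) = 0 := by
        linarith [H1.1, H2.1]
      have hW2 : (∑ t ∈ Finset.range L2,
          (v (i (e2 t)) {x (e2 t)} - v (i (e2 t)) {x (e2 ((t+1) % L2))})) = 0 := by
        linarith [H1.1, H2.1]
      by_cases hcase : a ≤ ℓ ∧ ℓ < b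
      · have hadd : a + (ℓ - a) = ℓ := by omega
        have this' : LegalItem v (i (a + (ℓ - a))) (x (a + (ℓ - a + 1) % L1)) :=
          H1.2 hW1 (ℓ - a) (by omega)
        rw [hx1 (ℓ - a) (by omega), hadd] at this'
        exact this'
      · set t := if b ≤ ℓ then ℓ - b else ℓ + (L - b) with hT
        have ht2 : t < L2 := by simp only [hT]; split <;> omega
        have this' : LegalItem v (i (e2 t)) (x (e2 ((t + 1) % L2))) :=
          H2.2 hW2 t ht2
        have he : e2 t = ℓ := by
          simp only [e2, hT]
          split
          · rw [if_pos (by omega)]; omega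
          · rw [if_neg (by omega)]; omega
        rw [hx2 t ht2, he] at this'
        exact this'
  · -- injective case: perform the cyclic swap
    push_neg at hdup
    have hinj : ∀ p < L, ∀ q < L, x p = x q → p = q := by
      intro p hp q hq hpq
      rcases lt_trichotomy p q with h | h | h
      · exact absurd hpq (hdup p q h hq)
      · exact h
      · exact absurd hpq.symm (hdup q p h hp)
    set nxt : ℕ → ℕ := fun ℓ => (ℓ+1) % L with hnxt
    have hnxtlt : ∀ ℓ, nxt ℓ < L := fun ℓ => Nat.mod_lt _ hL
    have hnxtinj : ∀ p < L, ∀ q < L, nxt p = nxt q → p = q := by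
      intro p hp q hq hpq
      simp only [nxt] at hpq
      rcases Nat.lt_or_ge (p+1) L with h1 | h1 <;> rcases Nat.lt_or_ge (q+1) L with h2 | h2
      · rw [Nat.mod_eq_of_lt h1, Nat.mod_eq_of_lt h2] at hpq; omega
      · have : q + 1 = L := by omega
        rw [Nat.mod_eq_of_lt h1, this, Nat.mod_self] at hpq; omega
      · have : p + 1 = L := by omega
        rw [Nat.mod_eq_of_lt h2, this, Nat.mod_self] at hpq; omega
      · omega
    set S : Fin n → Finset ℕ := fun j => (Finset.range L).filter (fun ℓ => i ℓ = j) with hSdef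
    have hSmem : ∀ {ℓ : ℕ} {j : Fin n}, ℓ ∈ S j ↔ ℓ < L ∧ i ℓ = j := by
      intro ℓ j
      simp [hSdef, Finset.mem_filter, Finset.mem_range]
    set R : Fin n → Finset M := fun j => (S j).image x with hRdef
    set Ad : Fin n → Finset M := fun j => (S j).image (fun ℓ => x (nxt ℓ)) with hAdddef
    set A : Fin n → Finset M := fun j => (O j \ R j) ∪ Ad j with hAdef
    have hRsub : ∀ j, R j ⊆ O j := by
      intro j y hy
      obtain ⟨ℓ, hℓ, rfl⟩ := Finset.mem_image.mp hy
      obtain ⟨h1, h2⟩ := hSmem.mp hℓ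
      exact h2 ▸ hxO ℓ h1
    have hAd_in_R : ∀ j j' (y : M), y ∈ Ad j → y ∈ O j' → y ∈ R j' := by
      intro j j' y hy hy'
      obtain ⟨ℓ, hℓ, rfl⟩ := Finset.mem_image.mp hy
      obtain ⟨h1, -⟩ := hSmem.mp hℓ
      have hmem : x (nxt ℓ) ∈ O (i (nxt ℓ)) := hxO _ (hnxtlt ℓ)
      have : i (nxt ℓ) = j' := hOdisj hmem hy'
      exact Finset.mem_image.mpr ⟨nxt ℓ, hSmem.mpr ⟨hnxtlt ℓ, this⟩, rfl⟩
    have hdisj2 : ∀ j, Disjoint (O j \ R j) (Ad j) := by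
      intro j
      rw [Finset.disjoint_left]
      intro y hy hy'
      exact (Finset.mem_sdiff.mp hy).2 (hAd_in_R j j y hy' (Finset.mem_sdiff.mp hy).1)
    have hAalloc : IsAlloc A := by
      intro j j' hjj'
      rw [Finset.disjoint_left]
      intro y hy hy'
      simp only [hAdef, Finset.mem_union] at hy hy'
      rcases hy with hy | hy <;> rcases hy' with hy' | hy'
      · exact hjj' (hOdisj (Finset.mem_sdiff.mp hy).1 (Finset.mem_sdiff.mp hy').1)
      · exact (Finset.mem_sdiff.mp hy).2 (hAd_in_R j' j y hy' (Finset.mem_sdiff.mp hy).1)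
      · exact (Finset.mem_sdiff.mp hy').2 (hAd_in_R j j' y hy (Finset.mem_sdiff.mp hy').1)
      · obtain ⟨ℓ, hℓ, he⟩ := Finset.mem_image.mp hy
        obtain ⟨ℓ', hℓ', he'⟩ := Finset.mem_image.mp hy'
        obtain ⟨h1, h2⟩ := hSmem.mp hℓ
        obtain ⟨h1', h2'⟩ := hSmem.mp hℓ'
        have : nxt ℓ = nxt ℓ' :=
          hinj _ (hnxtlt ℓ) _ (hnxtlt ℓ') (he.trans he'.symm)
        have : ℓ = ℓ' := hnxtinj _ h1 _ h1' this
        exact hjj' (h2 ▸ this ▸ h2')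
    have hxinjS : ∀ j, Set.InjOn x (S j) := by
      intro j p hp q hq
      exact hinj p (hSmem.mp hp).1 q (hSmem.mp hq).1
    have hnxinjS : ∀ j, Set.InjOn (fun ℓ => x (nxt ℓ)) (S j) := by
      intro j p hp q hq h
      exact hnxtinj p (hSmem.mp hp).1 q (hSmem.mp hq).1
        (hinj _ (hnxtlt p) _ (hnxtlt q) h)
    have hAcard : ∀ j, (A j).card = k j := by
      intro j
      have h1 : (R j).card = (S j).card := Finset.card_image_of_injOn (hxinjS j)
      have h2 : (Ad j).card = (S j).card := Finset.card_image_of_injOn (hnxinjS j)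
      have h3 : (R j).card ≤ (O j).card := Finset.card_le_card (hRsub j)
      rw [hAdef]
      rw [Finset.card_union_of_disjoint (hdisj2 j), Finset.card_sdiff_of_subset (hRsub j),
        h1, h2, ← hOcard j]
      omega
    have hvA : ∀ j, v j (A j) = ((∑ y ∈ O j, v j {y})
        - ∑ ℓ ∈ S j, v j {x ℓ}) + ∑ ℓ ∈ S j, v j {x (nxt ℓ)} := by
      intro j
      rw [md_eq_sum (hmd j) (le_of_eq (hAcard j))]
      show (∑ y ∈ (O j \ R j) ∪ Ad j, v j {y}) = _
      rw [Finset.sum_union (hdisj2 j), Finset.sum_sdiff_eq_sub (hRsub j)]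
      congr 1
      · congr 1
        rw [hRdef, Finset.sum_image (hxinjS j)]
      · rw [hAdddef, Finset.sum_image (hnxinjS j)]
    have hSWA : SW v A = SW v O
        - ∑ ℓ ∈ Finset.range L, (v (i ℓ) {x ℓ} - v (i ℓ) {x ((ℓ+1) % L)}) := by
      have hfib : ∀ f : ℕ → ℝ,
          (∑ j : Fin n, ∑ ℓ ∈ S j, f ℓ) = ∑ ℓ ∈ Finset.range L, f ℓ := by
        intro f
        rw [hSdef]
        exact Finset.sum_fiberwise (Finset.range L) i f
      have e1 : (∑ j : Fin n, ∑ ℓ ∈ S j, v j {x ℓ})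
          = ∑ ℓ ∈ Finset.range L, v (i ℓ) {x ℓ} := by
        rw [← hfib (fun ℓ => v (i ℓ) {x ℓ})]
        refine Finset.sum_congr rfl fun j _ => Finset.sum_congr rfl fun ℓ hℓ => ?_
        rw [(hSmem.mp hℓ).2]
      have e2 : (∑ j : Fin n, ∑ ℓ ∈ S j, v j {x (nxt ℓ)})
          = ∑ ℓ ∈ Finset.range L, v (i ℓ) {x ((ℓ+1) % L)} := by
        rw [← hfib (fun ℓ => v (i ℓ) {x ((ℓ+1) % L)})]
        refine Finset.sum_congr rfl fun j _ => Finset.sum_congr rfl fun ℓ hℓ => ?_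
        rw [(hSmem.mp hℓ).2]
      have eO : SW v O = ∑ j : Fin n, ∑ y ∈ O j, v j {y} :=
        Finset.sum_congr rfl fun j _ => md_eq_sum (hmd j) (le_of_eq (hOcard j))
      unfold SW
      unfold SW at eO
      rw [Finset.sum_congr rfl fun j _ => hvA j]
      rw [Finset.sum_add_distrib, Finset.sum_sub_distrib, e1, e2, ← eO,
        Finset.sum_sub_distrib]
      ring
    have hle : SW v A ≤ SW v O := hO.2 A hAalloc
    constructor
    · linarith [hle, hSWA]
    · intro h0 ℓ hℓ
      have hAopt : IsOptimalAlloc v A := by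
        refine ⟨hAalloc, fun B hB => ?_⟩
        have := hO.2 B hB
        rw [hSWA, h0]
        linarith
      refine ⟨A, hAopt, ?_⟩
      show x ((ℓ+1) % L) ∈ (O (i ℓ) \ R (i ℓ)) ∪ Ad (i ℓ)
      refine Finset.mem_union_right _ (Finset.mem_image.mpr ⟨ℓ, ?_, rfl⟩)
      exact hSmem.mpr ⟨hℓ, rfl⟩

end Aux

open Fin.NatCast

/-- If a cycle in the preference graph has weight 0, then every
item `x (ℓ+1)` is legal for buyer `i ℓ`. -/
theorem zero_weight_cycle_gives_legal
    {M : Type*} [Fintype M] [DecidableEq M] {n : ℕ}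
    (v : Fin n → Finset M → ℝ) (k : Fin n → ℕ)
    (hmono : ∀ i, MonotoneVal (v i)) (hnorm : ∀ i, v i ∅ = 0)
    (hmd : ∀ i, MultiDemand (v i) (k i))
    (hcard : Fintype.card M = ∑ i, k i)
    (hopt : ∀ A : Fin n → Finset M, IsOptimalAlloc v A →
      (∀ x : M, ∃ i, x ∈ A i) ∧ ∀ i, (A i).card = k i)
    (O : Fin n → Finset M) (hO : IsOptimalAlloc v O)
    {c : ℕ} (i : Fin (c + 1) → Fin n) (x : Fin (c + 1) → M)
    (hxO : ∀ ℓ, x ℓ ∈ O (i ℓ))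
    (hne : ∀ ℓ : Fin (c + 1), i ℓ ≠ i (ℓ + 1))
    (hsum : ∑ ℓ : Fin (c + 1), (v (i ℓ) {x ℓ} - v (i ℓ) {x (ℓ + 1)}) = 0) :
    ∀ ℓ : Fin (c + 1), LegalItem v (i ℓ) (x (ℓ + 1)) := by
  have hOprops := hopt O hO
  have key := cycle_key v k hmd O hO hOprops.2 (c+1) (Nat.succ_pos c)
    (fun ℓ : ℕ => i ℓ) (fun ℓ : ℕ => x ℓ) (fun ℓ _ => hxO ℓ)
  have hcast : ∀ m : Fin (c+1), ((((m : ℕ) + 1) % (c+1) : ℕ) : Fin (c+1)) = m + 1 := by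
    intro m
    have h1 : ((((m : ℕ) + 1) % (c+1) : ℕ) : Fin (c+1))
        = ((((m : ℕ) + 1) : ℕ) : Fin (c+1)) := by
      apply Fin.ext
      simp only [Fin.val_natCast]
      exact Nat.mod_mod_of_dvd _ dvd_rfl
    rw [h1, Nat.cast_add, Nat.cast_one, Fin.cast_val_eq_self]
  have hsum' : (∑ ℓ ∈ Finset.range (c+1),
      (v (i ℓ) {x ℓ} - v (i ℓ) {x (((ℓ+1) % (c+1) : ℕ) : Fin (c+1))})) = 0 := by
    rw [← Fin.sum_univ_eq_sum_range (fun ℓ : ℕ =>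
      v (i ℓ) {x ℓ} - v (i ℓ) {x (((ℓ+1) % (c+1) : ℕ) : Fin (c+1))}) (c+1), ← hsum]
    refine Finset.sum_congr rfl fun m _ => ?_
    simp only [Fin.cast_val_eq_self, hcast m]
  intro ℓ
  have this' : LegalItem v (i ((ℓ : ℕ) : Fin (c+1)))
      (x (((((ℓ : ℕ) + 1) % (c+1) : ℕ) : Fin (c+1)))) :=
    key.2 hsum' (ℓ : ℕ) ℓ.isLt
  rw [Fin.cast_val_eq_self, hcast ℓ] at this'
  exact this'
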